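/- Let (Y_t)_{t≥0} be a nonnegative (F_t)-adapted process with continuous sample paths such that Y_t = M_t + F_t for all t, where (M_t) is an (F_t)-martingale with M_0 = 0 that converges P-a.s. and in L¹ to a random variable M_∞, and (F_t) is an (F_t)-adapted process whose sample paths are continuous and nondecreasing with F_0 = 0 and P-integrable limit F_∞. Set Y_∞ := M_∞ + F_∞ and assume P(Y_∞ = 0) = 0 and that the Lebesgue–Stieltjes measure dF is P-a.s. carried by the zero set of Y, i.e. ∫_{(0,∞)} 1_{{Y_u > 0}} dF_u = 0 P-a.s. Define σ := sup{t ≥ 0 : Y_t = 0} (the set contains 0 since Y_0 = 0). Then for every t ≥ 0, P-almost surely, Y_t = E^P[Y_∞ · 1_{σ ≤ t} | F_t]. -/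

import Mathlib

open MeasureTheory Filter Set

noncomputable section

def Jset (cD : Set NNReal) (q s : NNReal) : Set NNReal := insert q (cD ∩ Set.Icc q s)

def hitIn (cD : Set NNReal) (y : NNReal → ℝ) (q s : NNReal) : Prop :=
  ⨅ u ∈ Jset cD q s, ENNReal.ofReal (y u) = 0

lemma Jset_subset_Icc {cD : Set NNReal} {q s : NNReal} (hqs : q ≤ s) :
    Jset cD q s ⊆ Set.Icc q s := by
  rintro v (rfl | hv)
  · exact ⟨le_rfl, hqs⟩
  · exact hv.2

lemma Jset_countable {cD : Set NNReal} (hcD : cD.Countable) (q s : NNReal) :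
    (Jset cD q s).Countable :=
  (hcD.mono Set.inter_subset_left).insert q

lemma hitIn_mono {cD : Set NNReal} {y : NNReal → ℝ} {q s s' : NNReal} (hss' : s ≤ s')
    (h : hitIn cD y q s) : hitIn cD y q s' := by
  refine le_antisymm ?_ (zero_le)
  rw [← h]
  refine le_iInf₂ fun u hu => ?_
  have hu' : u ∈ Jset cD q s' := by
    rcases hu with rfl | hu
    · exact Set.mem_insert _ _
    · exact Set.mem_insert_iff.2 (Or.inr ⟨hu.1, hu.2.1, hu.2.2.trans hss'⟩)
  exact iInf₂_le u hu'

lemma hitIn_of_zero {cD : Set NNReal} (hD : Dense cD) {y : NNReal → ℝ}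
    (hc : Continuous y) {q s u : NNReal} (hu : u ∈ Set.Icc q s) (hy : y u = 0) :
    hitIn cD y q s := by
  refine le_antisymm ?_ (zero_le)
  refine ENNReal.le_of_forall_pos_le_add fun ε hε _ => ?_
  rw [zero_add]
  rcases eq_or_lt_of_le hu.1 with hqu | hqu
  · refine le_trans (iInf₂_le q (Set.mem_insert _ _)) ?_
    rw [← hqu] at hy
    simp [hy]
  · -- q < u; find v ∈ cD ∩ Ioo q u with y v small
    have hcont : ∀ᶠ v in nhds u, y v < (ε : ℝ) := by
      have := hc.tendsto u
      have : ∀ᶠ v in nhds u, y v ∈ Set.Iio (ε : ℝ) := by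
        apply this.eventually
        apply Iio_mem_nhds
        rw [hy]; exact_mod_cast hε
      exact this
    obtain ⟨U, hUnhds, hU⟩ := eventually_iff_exists_mem.mp hcont
    have hcl : u ∈ closure (Set.Ioo q u) := by
      rw [closure_Ioo (ne_of_lt hqu)]
      exact ⟨le_of_lt hqu, le_rfl⟩
    obtain ⟨v, hvU, hvI⟩ := mem_closure_iff_nhds.mp hcl U hUnhds
    obtain ⟨w, hwD, hwU, hwI⟩ : ∃ w ∈ cD, w ∈ U ∧ w ∈ Set.Ioo q u := by
      have hopen : IsOpen (interior U ∩ Set.Ioo q u) := isOpen_interior.inter isOpen_Ioo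
      have hne : (interior U ∩ Set.Ioo q u).Nonempty := by
        obtain ⟨U', hU'sub, hU'open, hU'mem⟩ := mem_nhds_iff.mp hUnhds
        have : u ∈ closure (Set.Ioo q u) := hcl
        obtain ⟨w, hw1, hw2⟩ := mem_closure_iff_nhds.mp this (interior U)
          (mem_of_superset (hU'open.mem_nhds hU'mem) (interior_maximal hU'sub hU'open))
        exact ⟨w, hw1, hw2⟩
      obtain ⟨w, hwD, hw⟩ := hD.exists_mem_open hopen hne
      exact ⟨w, hwD, interior_subset hw.1, hw.2⟩
    have hwJ : w ∈ Jset cD q s :=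
      Set.mem_insert_iff.2 (Or.inr ⟨hwD, le_of_lt hwI.1, hwI.2.le.trans hu.2⟩)
    refine le_trans (iInf₂_le w hwJ) ?_
    exact le_trans (ENNReal.ofReal_le_ofReal (hU w hwU).le) (by simp)

lemma exists_zero_of_hitIn {cD : Set NNReal} {y : NNReal → ℝ}
    (hc : Continuous y) (hnn : ∀ u, 0 ≤ y u) {q s : NNReal} (hqs : q ≤ s)
    (h : hitIn cD y q s) : ∃ u ∈ Set.Icc q s, y u = 0 := by
  obtain ⟨u₀, hu₀, hmin⟩ := isCompact_Icc.exists_isMinOn (Set.nonempty_Icc.2 hqs)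
    (hc.continuousOn (s := Set.Icc q s))
  refine ⟨u₀, hu₀, ?_⟩
  by_contra hne
  have hpos : 0 < y u₀ := lt_of_le_of_ne (hnn u₀) (Ne.symm hne)
  have : ENNReal.ofReal (y u₀) ≤ ⨅ u ∈ Jset cD q s, ENNReal.ofReal (y u) := by
    refine le_iInf₂ fun v hv => ?_
    exact ENNReal.ofReal_le_ofReal (hmin (Jset_subset_Icc hqs hv))
  rw [h] at this
  exact absurd (le_antisymm this (zero_le)) (ne_of_gt (ENNReal.ofReal_pos.2 hpos))

def firstZero (y : NNReal → ℝ) (q n : NNReal) : NNReal :=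
  sInf {u | u ∈ Set.Icc q n ∧ y u = 0}

lemma firstZero_mem {y : NNReal → ℝ} {q n : NNReal} (hc : Continuous y)
    (hz : ∃ u ∈ Set.Icc q n, y u = 0) :
    firstZero y q n ∈ Set.Icc q n ∧ y (firstZero y q n) = 0 := by
  have hcl : IsClosed {u | u ∈ Set.Icc q n ∧ y u = 0} := by
    have : {u | u ∈ Set.Icc q n ∧ y u = 0} = Set.Icc q n ∩ y ⁻¹' {0} := by
      ext u; simp only [Set.mem_setOf_eq, Set.mem_inter_iff, Set.mem_preimage,
      Set.mem_singleton_iff]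
    rw [this]
    exact isClosed_Icc.inter (isClosed_singleton.preimage hc)
  obtain ⟨u, hu, hyu⟩ := hz
  exact hcl.csInf_mem ⟨u, hu, hyu⟩ (OrderBot.bddBelow _)

lemma firstZero_le {y : NNReal → ℝ} {q n u : NNReal} (hu : u ∈ Set.Icc q n)
    (hy : y u = 0) : firstZero y q n ≤ u :=
  csInf_le (OrderBot.bddBelow _) ⟨hu, hy⟩

lemma pos_of_lt_firstZero {y : NNReal → ℝ} {q n v : NNReal} (hnn : ∀ u, 0 ≤ y u)
    (hv : v ∈ Set.Icc q n) (h : v < firstZero y q n) : 0 < y v := by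
  rcases lt_or_eq_of_le (hnn v) with h' | h'
  · exact h'
  · exact absurd (firstZero_le hv h'.symm) (not_le.2 h)

lemma hitIn_iff_firstZero_le {cD : Set NNReal} (hD : Dense cD) {y : NNReal → ℝ}
    (hc : Continuous y) (hnn : ∀ u, 0 ≤ y u) {q n : NNReal} (hqn : q ≤ n)
    (hhit : hitIn cD y q n) {r : NNReal} (hqr : q ≤ r) (hrn : r ≤ n) :
    hitIn cD y q r ↔ firstZero y q n ≤ r := by
  constructor
  · intro h
    obtain ⟨u, hu, hyu⟩ := exists_zero_of_hitIn hc hnn hqr h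
    exact le_trans (firstZero_le ⟨hu.1, hu.2.trans hrn⟩ hyu) hu.2
  · intro h
    obtain ⟨hmem, hy0⟩ := firstZero_mem hc (exists_zero_of_hitIn hc hnn hqn hhit)
    exact hitIn_of_zero hD hc ⟨hmem.1, h⟩ hy0

lemma exists_left_close {f : NNReal → ℝ} (hc : Continuous f) {q r : NNReal}
    (hqr : q < r) {ε : ℝ} (hε : 0 < ε) :
    ∃ a, q ≤ a ∧ a < r ∧ |f r - f a| < ε := by
  have hev : ∀ᶠ a in nhds r, dist (f a) (f r) < ε :=
    Metric.tendsto_nhds.mp (hc.tendsto r) ε hε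
  have hcl : r ∈ closure (Set.Ioo q r) := by
    rw [closure_Ioo (ne_of_lt hqr)]
    exact ⟨le_of_lt hqr, le_rfl⟩
  obtain ⟨a, ha1, ha2⟩ := mem_closure_iff_nhds.mp hcl _ hev
  refine ⟨a, ha2.1.le, ha2.2, ?_⟩
  have := ha1
  simp only [Set.mem_setOf_eq, Real.dist_eq] at this
  rw [abs_sub_comm]
  exact this

/-- a Stieltjes-type measure with continuous cdf has no atoms -/
lemma meas_singleton_zero {μ : Measure NNReal} {f : NNReal → ℝ}
    (hIoc : ∀ a b : NNReal, a ≤ b → μ (Set.Ioc a b) = ENNReal.ofReal (f b - f a))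
    (hfc : Continuous f) {q r : NNReal} (hqr : q < r) : μ {r} = 0 := by
  refine le_antisymm ?_ (zero_le)
  refine ENNReal.le_of_forall_pos_le_add fun ε hε _ => ?_
  rw [zero_add]
  obtain ⟨a, hqa, har, hclose⟩ := exists_left_close hfc hqr (by exact_mod_cast hε : (0:ℝ) < ε)
  calc μ {r} ≤ μ (Set.Ioc a r) := measure_mono (by simp [har])
    _ = ENNReal.ofReal (f r - f a) := hIoc a r har.le
    _ ≤ ε := by
        have h1 : f r - f a ≤ (ε : ℝ) := le_of_lt (lt_of_le_of_lt (le_abs_self _) hclose)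
        calc ENNReal.ofReal (f r - f a) ≤ ENNReal.ofReal (ε : ℝ) :=
              ENNReal.ofReal_le_ofReal h1
          _ = ε := ENNReal.ofReal_coe_nnreal

/-- if `y > 0` on the open interval `(q, r)` then `f` is constant on `[q, r]`. -/
lemma stieltjes_const {μ : Measure NNReal} {f : NNReal → ℝ} {y : NNReal → ℝ}
    (hIoc : ∀ a b : NNReal, a ≤ b → μ (Set.Ioc a b) = ENNReal.ofReal (f b - f a))
    (hfc : Continuous f) (hmono : Monotone f)
    (hcar : μ {u | 0 < y u} = 0)
    {q r : NNReal} (hqr : q ≤ r) (hz : ∀ v, q < v → v < r → 0 < y v) :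
    f r = f q := by
  rcases eq_or_lt_of_le hqr with rfl | hqr'
  · rfl
  have hsub : Set.Ioc q r ⊆ {u | 0 < y u} ∪ {r} := by
    intro v hv
    rcases lt_or_eq_of_le hv.2 with h | h
    · exact Or.inl (hz v hv.1 h)
    · exact Or.inr (by simp [h])
  have hIoc0 : μ (Set.Ioc q r) = 0 := by
    refine le_antisymm ?_ (zero_le)
    calc μ (Set.Ioc q r) ≤ μ ({u | 0 < y u} ∪ {r}) := measure_mono hsub
      _ ≤ μ {u | 0 < y u} + μ {r} := measure_union_le _ _
      _ = 0 := by rw [hcar, meas_singleton_zero hIoc hfc hqr', add_zero]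
  rw [hIoc q r hqr] at hIoc0
  have : f r - f q ≤ 0 := by
    by_contra h
    push_neg at h
    exact absurd hIoc0 (ne_of_gt (ENNReal.ofReal_pos.2 h))
  linarith [hmono hqr]

/-- if the measure gives no mass to `(t, ∞)` then `f t` equals the total mass `c`. -/
lemma stieltjes_tail_const {μ : Measure NNReal} {f : NNReal → ℝ} {c : ℝ}
    (hIoc : ∀ a b : NNReal, a ≤ b → μ (Set.Ioc a b) = ENNReal.ofReal (f b - f a))
    (h0 : μ {0} = 0) (huniv : μ Set.univ = ENNReal.ofReal c)
    (hf0 : f 0 = 0) (hmono : Monotone f)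
    (hlim : Tendsto f atTop (nhds c)) {t : NNReal}
    (htail : μ (Set.Ioi t) = 0) : c = f t := by
  have hft0 : 0 ≤ f t := hf0 ▸ hmono ((zero_le (a := t)))
  have hcle : c ≤ f t := by
    have hcover : (Set.univ : Set NNReal) ⊆ {0} ∪ Set.Ioc 0 t ∪ Set.Ioi t := by
      intro v _
      rcases eq_or_lt_of_le ((zero_le (a := v))) with h | h
      · exact Or.inl (Or.inl (by simp [← h]))
      rcases le_or_gt v t with h' | h'
      · exact Or.inl (Or.inr ⟨h, h'⟩)
      · exact Or.inr h'
    have : μ Set.univ ≤ ENNReal.ofReal (f t) := by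
      calc μ Set.univ ≤ μ ({0} ∪ Set.Ioc 0 t ∪ Set.Ioi t) := measure_mono hcover
        _ ≤ μ ({0} ∪ Set.Ioc 0 t) + μ (Set.Ioi t) := measure_union_le _ _
        _ ≤ μ {0} + μ (Set.Ioc 0 t) + μ (Set.Ioi t) :=
            add_le_add_left (measure_union_le _ _) _
        _ = ENNReal.ofReal (f t - f 0) := by rw [h0, htail, hIoc 0 t ((zero_le (a := t)))]; simp
        _ = ENNReal.ofReal (f t) := by rw [hf0, sub_zero]
    rw [huniv] at this
    by_contra h
    push_neg at h
    exact absurd this (not_le.2 (ENNReal.ofReal_lt_ofReal_iff_of_nonneg hft0 |>.2 h))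
  have hge : f t ≤ c := hmono.ge_of_tendsto hlim t
  linarith

lemma sum_indicator_cases {ι Ω : Type*} (s : Finset ι) (Δ : ι → Set Ω)
    (hdisj : Set.Pairwise ↑s (Function.onFun Disjoint Δ)) (h : ι → Ω → ℝ) (ω : Ω) :
    (∃ i ∈ s, ω ∈ Δ i ∧ ∑ j ∈ s, (Δ j).indicator (h j) ω = h i ω) ∨
      ((∀ i ∈ s, ω ∉ Δ i) ∧ ∑ j ∈ s, (Δ j).indicator (h j) ω = 0) := by
  by_cases hex : ∃ i ∈ s, ω ∈ Δ i
  · obtain ⟨i, hi, hωi⟩ := hex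
    refine Or.inl ⟨i, hi, hωi, ?_⟩
    rw [Finset.sum_eq_single_of_mem i hi]
    · simp [Set.indicator_of_mem hωi]
    · intro j hj hji
      have : ω ∉ Δ j := fun hωj =>
        Set.disjoint_left.mp (hdisj hj hi hji) hωj hωi
      simp [Set.indicator_of_notMem this]
  · push_neg at hex
    refine Or.inr ⟨hex, ?_⟩
    refine Finset.sum_eq_zero fun j hj => Set.indicator_of_notMem (hex j hj) _

def grid (q n : NNReal) (k i : ℕ) : NNReal := q + (n - q) * i / 2 ^ k

lemma grid_zero (q n : NNReal) (k : ℕ) : grid q n k 0 = q := by simp [grid]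

lemma grid_last (q n : NNReal) (k : ℕ) (hqn : q ≤ n) : grid q n k (2 ^ k) = n := by
  have h2 : (2 : NNReal) ^ k ≠ 0 := by positivity
  simp only [grid]
  rw [show ((2 ^ k : ℕ) : NNReal) = (2 : NNReal) ^ k by push_cast; ring]
  rw [mul_div_assoc, div_self h2, mul_one, add_tsub_cancel_of_le hqn]

lemma grid_mono (q n : NNReal) (k : ℕ) {i j : ℕ} (hij : i ≤ j) :
    grid q n k i ≤ grid q n k j := by
  have h : ((i : NNReal)) ≤ (j : NNReal) := by exact_mod_cast hij
  refine add_le_add_right ?_ _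
  gcongr

lemma grid_ge (q n : NNReal) (k i : ℕ) : q ≤ grid q n k i := le_add_right le_rfl

lemma grid_le (q n : NNReal) (k : ℕ) (hqn : q ≤ n) {i : ℕ} (hi : i ≤ 2 ^ k) :
    grid q n k i ≤ n := by
  calc grid q n k i ≤ grid q n k (2 ^ k) := grid_mono q n k hi
    _ = n := grid_last q n k hqn

lemma grid_succ (q n : NNReal) (k i : ℕ) :
    grid q n k (i + 1) = grid q n k i + (n - q) / 2 ^ k := by
  simp only [grid]
  push_cast
  rw [mul_add, mul_one, add_div, add_assoc]

lemma mesh_tendsto (a : NNReal) :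
    Tendsto (fun k : ℕ => a / 2 ^ k) atTop (nhds 0) := by
  have h : Tendsto (fun k : ℕ => ((2 : NNReal)⁻¹) ^ k) atTop (nhds 0) :=
    NNReal.tendsto_pow_atTop_nhds_zero_of_lt_one
      (by rw [NNReal.inv_lt_one_iff] <;> norm_num)
  have := h.const_mul a
  rw [mul_zero] at this
  refine this.congr fun k => ?_
  rw [div_eq_mul_inv, inv_pow]

lemma mem_disjointed_iff {Ω : Type*} {f : ℕ → Set Ω} (hf : Monotone f) (i : ℕ) (ω : Ω) :
    ω ∈ disjointed f i ↔ ω ∈ f i ∧ ∀ j < i, ω ∉ f j := by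
  cases i with
  | zero => simp [disjointed_zero]
  | succ i =>
    rw [show disjointed f (i + 1) = f (i + 1) \ f i from by
      have h := hf.disjointed_succ (not_isMax i); rwa [Order.succ_eq_add_one] at h]
    constructor
    · rintro ⟨h1, h2⟩
      exact ⟨h1, fun j hj hωj => h2 (hf (by omega : j ≤ i) hωj)⟩
    · rintro ⟨h1, h2⟩
      exact ⟨h1, h2 i (Nat.lt_succ_self i)⟩

lemma lemA {Ω : Type*} {m : MeasurableSpace Ω}
    (P : Measure Ω) [IsProbabilityMeasure P]
    (ℱ : Filtration NNReal m)
    (Y M F : NNReal → Ω → ℝ) (Finf : Ω → ℝ)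
    (hYadapted : ∀ t : NNReal, StronglyMeasurable[ℱ t] (Y t))
    (hYnonneg : ∀ᵐ ω ∂P, ∀ t, 0 ≤ Y t ω)
    (hYcont : ∀ᵐ ω ∂P, Continuous fun t => Y t ω)
    (hdecomp : ∀ t ω, Y t ω = M t ω + F t ω)
    (hM : Martingale M ℱ P)
    (hFadapted : ∀ t : NNReal, StronglyMeasurable[ℱ t] (F t))
    (hFmono : ∀ᵐ ω ∂P, Monotone fun t => F t ω)
    (hFcont : ∀ᵐ ω ∂P, Continuous fun t => F t ω)
    (hF0 : ∀ᵐ ω ∂P, F 0 ω = 0)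
    (hFbnd : ∀ᵐ ω ∂P, ∀ s, F s ω ≤ Finf ω)
    (hFinf_int : Integrable Finf P)
    (ν : Ω → Measure NNReal)
    (hνIoc : ∀ᵐ ω ∂P, ∀ a b : NNReal, a ≤ b →
      ν ω (Set.Ioc a b) = ENNReal.ofReal (F b ω - F a ω))
    (hcarried : ∀ᵐ ω ∂P, ν ω {u | 0 < Y u ω} = 0)
    (cD : Set NNReal) (hcDc : cD.Countable) (hcDd : Dense cD)
    (q n : NNReal) (hqn : q ≤ n) (A : Set Ω) (hA : MeasurableSet[ℱ q] A) :
    ∫ ω in A ∩ {ω | hitIn cD (fun u => Y u ω) q n}, (M n ω + F q ω) ∂P = 0 := by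
  classical
  -- basic setup
  set Bs : NNReal → Set Ω := fun r => {ω | hitIn cD (fun u => Y u ω) q r} with hBs_def
  have hBmeas : ∀ r, q ≤ r → MeasurableSet[ℱ r] (Bs r) := by
    intro r hqr
    have hcnt : Countable ↥(Jset cD q r) := (Jset_countable hcDc q r).to_subtype
    have hmeas : Measurable[ℱ r] fun ω => ⨅ u : Jset cD q r, ENNReal.ofReal (Y u ω) := by
      refine Measurable.iInf fun u => ?_
      have hur : (u : NNReal) ≤ r := (Jset_subset_Icc hqr u.2).2
      exact ((hYadapted u).mono (ℱ.mono hur)).measurable.ennreal_ofReal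
    have : Bs r = (fun ω => ⨅ u : Jset cD q r, ENNReal.ofReal (Y u ω)) ⁻¹' {0} := by
      ext ω
      simp only [hBs_def, Set.mem_setOf_eq, Set.mem_preimage, Set.mem_singleton_iff, hitIn,
        iInf_subtype]
    rw [this]
    exact hmeas (measurableSet_singleton 0)
  have hBmono : ∀ r r', r ≤ r' → Bs r ⊆ Bs r' := fun r r' h ω hω => hitIn_mono h hω
  have hFint : ∀ s, Integrable (F s) P := by
    intro s
    refine hFinf_int.mono ((hFadapted s).mono (ℱ.le s)).aestronglyMeasurable ?_
    filter_upwards [hFmono, hF0, hFbnd] with ω h1 h2 h3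
    rw [Real.norm_eq_abs, Real.norm_eq_abs]
    have h0 : 0 ≤ F s ω := h2 ▸ h1 ((zero_le (a := s)))
    rw [abs_of_nonneg h0]
    exact le_trans (h3 s) (le_abs_self _)
  have hYint : ∀ s, Integrable (Y s) P :=
    fun s => ((hM.integrable s).add (hFint s)).congr
      (Filter.Eventually.of_forall fun ω => (hdecomp s ω).symm)
  -- grids and disjointifications
  set g : ℕ → ℕ → NNReal := fun k i => grid q n k (min i (2 ^ k)) with hg_def
  have hgq : ∀ k i, q ≤ g k i := fun k i => grid_ge q n k _
  have hgn : ∀ k i, g k i ≤ n := fun k i => grid_le q n k hqn (min_le_right _ _)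
  have hgmono : ∀ k, Monotone (g k) := fun k i j hij =>
    grid_mono q n k (min_le_min_right _ hij)
  set fs : ℕ → ℕ → Set Ω := fun k i => Bs (g k i) with hfs_def
  have hfsmono : ∀ k, Monotone (fs k) := fun k i j hij => hBmono _ _ (hgmono k hij)
  set Δ : ℕ → ℕ → Set Ω := fun k => disjointed (fs k) with hΔ_def
  have hΔmeas : ∀ k i, MeasurableSet[ℱ (g k i)] (Δ k i) := by
    intro k i
    cases i with
    | zero =>
      have he : Δ k 0 = fs k 0 := disjointed_zero (fs k)
      rw [he]; exact hBmeas _ (hgq k 0)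
    | succ i =>
      have he : Δ k (i + 1) = fs k (i + 1) \ fs k i := by
        have h := (hfsmono k).disjointed_succ (not_isMax i); rwa [Order.succ_eq_add_one] at h
      rw [he]
      exact (hBmeas _ (hgq k (i+1))).diff
        ((ℱ.mono (hgmono k (Nat.le_succ i))) _ (hBmeas _ (hgq k i)))
  have hΔdisj : ∀ k, Pairwise (Function.onFun Disjoint (Δ k)) := fun k => disjoint_disjointed (fs k)
  have hΔsub : ∀ k i, Δ k i ⊆ Bs n := fun k i =>
    le_trans (disjointed_le (fs k) i) (hBmono _ _ (hgn k i))
  have hΔm : ∀ k i, MeasurableSet (A ∩ Δ k i) := fun k i =>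
    ((ℱ.le q) A hA).inter ((ℱ.le (g k i)) _ (hΔmeas k i))
  have hfs_top : ∀ k, Bs n = fs k (2 ^ k) := by
    intro k
    simp only [hfs_def, hg_def]
    rw [min_self, grid_last q n k hqn]
  have hcover : ∀ k, A ∩ Bs n = ⋃ i ∈ Finset.range (2 ^ k + 1), A ∩ Δ k i := by
    intro k
    ext ω
    simp only [Set.mem_inter_iff, Set.mem_iUnion, Finset.mem_range, exists_prop]
    constructor
    · rintro ⟨hAω, hBω⟩
      have htop : ω ∈ fs k (2 ^ k) := by rw [← hfs_top k]; exact hBω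
      have hex : ∃ i, ω ∈ fs k i := ⟨2 ^ k, htop⟩
      refine ⟨Nat.find hex, ?_, hAω, ?_⟩
      · have : Nat.find hex ≤ 2 ^ k := Nat.find_le htop
        omega
      · exact (mem_disjointed_iff (hfsmono k) _ ω).2
          ⟨Nat.find_spec hex, fun j hj => Nat.find_min hex hj⟩
    · rintro ⟨i, _, hAω, hΔω⟩
      exact ⟨hAω, hΔsub k i hΔω⟩
  -- stopped processes
  set ΦY : ℕ → Ω → ℝ := fun k ω =>
    ∑ i ∈ Finset.range (2 ^ k + 1), (Δ k i).indicator (fun ω' => Y (g k i) ω') ω with hΦY_def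
  set ΦF : ℕ → Ω → ℝ := fun k ω =>
    ∑ i ∈ Finset.range (2 ^ k + 1), (Δ k i).indicator (fun ω' => F (g k i) ω') ω with hΦF_def
  have hΦYint : ∀ k, Integrable (ΦY k) P := by
    intro k
    exact integrable_finset_sum _ fun i _ =>
      (hYint (g k i)).indicator ((ℱ.le (g k i)) _ (hΔmeas k i))
  have hΦFint : ∀ k, Integrable (ΦF k) P := by
    intro k
    exact integrable_finset_sum _ fun i _ =>
      (hFint (g k i)).indicator ((ℱ.le (g k i)) _ (hΔmeas k i))
  -- splitting of the integral
  have hsplit : ∀ k (h : Ω → ℝ), Integrable h P →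
      ∫ ω in A ∩ Bs n, h ω ∂P
        = ∑ i ∈ Finset.range (2 ^ k + 1), ∫ ω in A ∩ Δ k i, h ω ∂P := by
    intro k h hint
    rw [hcover k]
    refine integral_biUnion_finset _ (fun i _ => hΔm k i) ?_ fun i _ => hint.integrableOn
    intro i _ j _ hij
    exact Disjoint.mono Set.inter_subset_right Set.inter_subset_right ((hΔdisj k) hij)
  -- sum evaluation on each piece
  have heval : ∀ k (G : NNReal → Ω → ℝ) i, i ∈ Finset.range (2 ^ k + 1) → ∀ ω, ω ∈ Δ k i →
      (∑ j ∈ Finset.range (2 ^ k + 1), (Δ k j).indicator (fun ω' => G (g k j) ω') ω)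
        = G (g k i) ω := by
    intro k G i hi ω hω
    rcases sum_indicator_cases (Finset.range (2 ^ k + 1)) (Δ k)
        ((hΔdisj k).set_pairwise _) (fun j ω' => G (g k j) ω') ω with
      ⟨j, hj, hωj, heq⟩ | ⟨hnone, _⟩
    · have : j = i := by
        by_contra hne
        exact Set.disjoint_left.mp ((hΔdisj k) hne) hωj hω
      rw [← this]; exact heq
    · exact absurd hω (hnone i hi)
  have hΦYeval : ∀ k i, i ∈ Finset.range (2 ^ k + 1) → ∀ ω ∈ A ∩ Δ k i,
      ΦY k ω = Y (g k i) ω := fun k i hi ω hω => heval k Y i hi ω hω.2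
  have hΦFeval : ∀ k i, i ∈ Finset.range (2 ^ k + 1) → ∀ ω ∈ A ∩ Δ k i,
      ΦF k ω = F (g k i) ω := fun k i hi ω hω => heval k F i hi ω hω.2
  -- claim 1 : martingale transport
  have claim1 : ∀ k, ∫ ω in A ∩ Bs n, M n ω ∂P
      = (∫ ω in A ∩ Bs n, ΦY k ω ∂P) - ∫ ω in A ∩ Bs n, ΦF k ω ∂P := by
    intro k
    have hAΔ : ∀ i, MeasurableSet[ℱ (g k i)] (A ∩ Δ k i) := fun i =>
      (((ℱ.mono (hgq k i)) _ hA).inter (hΔmeas k i))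
    calc ∫ ω in A ∩ Bs n, M n ω ∂P
        = ∑ i ∈ Finset.range (2 ^ k + 1), ∫ ω in A ∩ Δ k i, M n ω ∂P :=
          hsplit k (M n) (hM.integrable n)
      _ = ∑ i ∈ Finset.range (2 ^ k + 1), ∫ ω in A ∩ Δ k i, (ΦY k ω - ΦF k ω) ∂P := by
          refine Finset.sum_congr rfl fun i hi => ?_
          rw [← hM.setIntegral_eq (hgn k i) (hAΔ i)]
          refine setIntegral_congr_fun (ℱ.le _ _ (hAΔ i)) fun ω hω => ?_
          rw [hΦYeval k i hi ω hω, hΦFeval k i hi ω hω]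
          have := hdecomp (g k i) ω
          linarith
      _ = ∫ ω in A ∩ Bs n, (ΦY k ω - ΦF k ω) ∂P :=
          (hsplit k _ ((hΦYint k).sub (hΦFint k))).symm
      _ = (∫ ω in A ∩ Bs n, ΦY k ω ∂P) - ∫ ω in A ∩ Bs n, ΦF k ω ∂P :=
          integral_sub (hΦYint k).integrableOn (hΦFint k).integrableOn
  -- claim 2 : submartingale bound on the positive part
  have claim2 : ∀ (c : ℝ), 0 ≤ c → ∀ k,
      ∫ ω in A ∩ Bs n, max (ΦY k ω - c) 0 ∂P ≤ ∫ ω, max (Y n ω - c) 0 ∂P := by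
    intro c hc k
    have hFc : ∀ s : NNReal, Integrable (fun ω => F s ω - c) P := fun s =>
      (hFint s).sub (integrable_const c)
    have hYc : ∀ s : NNReal, Integrable (fun ω => Y s ω - c) P := fun s =>
      (hYint s).sub (integrable_const c)
    have hΦc : Integrable (fun ω => ΦY k ω - c) P := (hΦYint k).sub (integrable_const c)
    have hInt_Yn : Integrable (fun ω => max (Y n ω - c) 0) P := (hYc n).pos_part
    have hIntΦ : Integrable (fun ω => max (ΦY k ω - c) 0) P := hΦc.pos_part
    -- the sets
    set E : ℕ → Set Ω := fun i => {ω | c < Y (g k i) ω} with hE_def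
    have hEmeas : ∀ i, MeasurableSet[ℱ (g k i)] (E i) :=
      fun i => measurableSet_lt measurable_const (hYadapted (g k i)).measurable
    set S : ℕ → Set Ω := fun i => (A ∩ Δ k i) ∩ E i with hS_def
    have hSmeas : ∀ i, MeasurableSet[ℱ (g k i)] (S i) := fun i =>
      (((ℱ.mono (hgq k i)) _ hA).inter (hΔmeas k i)).inter (hEmeas i)
    have hSm : ∀ i, MeasurableSet (S i) := fun i => (ℱ.le (g k i)) _ (hSmeas i)
    calc ∫ ω in A ∩ Bs n, max (ΦY k ω - c) 0 ∂P
        = ∑ i ∈ Finset.range (2 ^ k + 1), ∫ ω in A ∩ Δ k i, max (ΦY k ω - c) 0 ∂P :=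
          hsplit k _ hIntΦ
      _ = ∑ i ∈ Finset.range (2 ^ k + 1), ∫ ω in S i, (Y (g k i) ω - c) ∂P := by
          refine Finset.sum_congr rfl fun i hi => ?_
          have h1 : ∫ ω in A ∩ Δ k i, max (ΦY k ω - c) 0 ∂P
              = ∫ ω in A ∩ Δ k i, (E i).indicator (fun ω' => Y (g k i) ω' - c) ω ∂P := by
            refine setIntegral_congr_fun (hΔm k i) fun ω hω => ?_
            rw [hΦYeval k i hi ω hω]
            by_cases hωE : ω ∈ E i
            · rw [Set.indicator_of_mem hωE]
              exact max_eq_left (by simp only [hE_def, Set.mem_setOf_eq] at hωE; linarith)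
            · rw [Set.indicator_of_notMem hωE]
              refine max_eq_right ?_
              simp only [hE_def, Set.mem_setOf_eq, not_lt] at hωE
              linarith
          rw [h1, setIntegral_indicator ((ℱ.le (g k i)) _ (hEmeas i))]
      _ ≤ ∑ i ∈ Finset.range (2 ^ k + 1), ∫ ω in S i, max (Y n ω - c) 0 ∂P := by
          refine Finset.sum_le_sum fun i hi => ?_
          have hstep1 : ∫ ω in S i, (Y (g k i) ω - c) ∂P
              = (∫ ω in S i, M (g k i) ω ∂P) + ∫ ω in S i, (F (g k i) ω - c) ∂P := by
            have he : ∫ ω in S i, (Y (g k i) ω - c) ∂P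
                = ∫ ω in S i, (M (g k i) ω + (F (g k i) ω - c)) ∂P := by
              refine setIntegral_congr_fun (hSm i) fun ω _ => ?_
              have := hdecomp (g k i) ω
              ring_nf
              linarith
            rw [he]
            exact integral_add (hM.integrable (g k i)).integrableOn (hFc (g k i)).integrableOn
          have hstep2 : ∫ ω in S i, M (g k i) ω ∂P = ∫ ω in S i, M n ω ∂P :=
            hM.setIntegral_eq (hgn k i) (hSmeas i)
          have hstep3 : ∫ ω in S i, (F (g k i) ω - c) ∂P ≤ ∫ ω in S i, (F n ω - c) ∂P := by
            refine integral_mono_ae (hFc (g k i)).integrableOn (hFc n).integrableOn ?_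
            refine ae_restrict_of_ae ?_
            filter_upwards [hFmono] with ω hmono
            have : F (g k i) ω ≤ F n ω := hmono (hgn k i)
            linarith
          have hstep4 : (∫ ω in S i, M n ω ∂P) + ∫ ω in S i, (F n ω - c) ∂P
              = ∫ ω in S i, (Y n ω - c) ∂P := by
            have he : ∫ ω in S i, (Y n ω - c) ∂P
                = ∫ ω in S i, (M n ω + (F n ω - c)) ∂P := by
              refine setIntegral_congr_fun (hSm i) fun ω _ => ?_
              have := hdecomp n ω
              ring_nf
              linarith
            rw [he]
            exact (integral_add (hM.integrable n).integrableOn (hFc n).integrableOn).symm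
          have hstep5 : ∫ ω in S i, (Y n ω - c) ∂P ≤ ∫ ω in S i, max (Y n ω - c) 0 ∂P :=
            integral_mono_ae (hYc n).integrableOn
              hInt_Yn.integrableOn (Filter.Eventually.of_forall fun ω => le_max_left _ _)
          calc ∫ ω in S i, (Y (g k i) ω - c) ∂P
              = (∫ ω in S i, M (g k i) ω ∂P) + ∫ ω in S i, (F (g k i) ω - c) ∂P := hstep1
            _ ≤ (∫ ω in S i, M n ω ∂P) + ∫ ω in S i, (F n ω - c) ∂P := by
                rw [hstep2]; exact add_le_add_right hstep3 _
            _ = ∫ ω in S i, (Y n ω - c) ∂P := hstep4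
            _ ≤ ∫ ω in S i, max (Y n ω - c) 0 ∂P := hstep5
      _ = ∫ ω in ⋃ i ∈ Finset.range (2 ^ k + 1), S i, max (Y n ω - c) 0 ∂P := by
          refine (integral_biUnion_finset _ (fun i _ => hSm i) ?_
            fun i _ => hInt_Yn.integrableOn).symm
          intro i _ j _ hij
          refine Disjoint.mono ?_ ?_ ((hΔdisj k) hij)
          · exact le_trans Set.inter_subset_left Set.inter_subset_right
          · exact le_trans Set.inter_subset_left Set.inter_subset_right
      _ ≤ ∫ ω, max (Y n ω - c) 0 ∂P := by
          refine setIntegral_le_integral hInt_Yn ?_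
          exact Filter.Eventually.of_forall fun ω => le_max_right _ _
  -- pointwise convergence of the stopped processes
  have hptwise : ∀ ω, (∀ u, 0 ≤ Y u ω) → Continuous (fun u => Y u ω) →
      Continuous (fun u => F u ω) → ω ∈ Bs n →
      Tendsto (fun k => ΦY k ω) atTop (nhds 0) ∧
      Tendsto (fun k => ΦF k ω) atTop
        (nhds (F (firstZero (fun u => Y u ω) q n) ω)) := by
    intro ω hnn hc hFc hB
    set y : NNReal → ℝ := fun u => Y u ω with hy_def
    set z : NNReal := firstZero y q n with hz_def
    have hBn : hitIn cD y q n := hB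
    have hzspec := firstZero_mem hc (exists_zero_of_hitIn hc hnn hqn hBn)
    have hiff : ∀ r, q ≤ r → r ≤ n → (hitIn cD y q r ↔ z ≤ r) := fun r h1 h2 =>
      hitIn_iff_firstZero_le hcDd hc hnn hqn hBn h1 h2
    have htop : ∀ k, ω ∈ fs k (2 ^ k) := fun k => by rw [← hfs_top k]; exact hB
    have hex : ∀ k, ∃ i, ω ∈ fs k i := fun k => ⟨2 ^ k, htop k⟩
    set ik : ℕ → ℕ := fun k => Nat.find (hex k) with hik_def
    have hik_le : ∀ k, ik k ≤ 2 ^ k := fun k => Nat.find_le (htop k)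
    have hΔik : ∀ k, ω ∈ Δ k (ik k) := fun k => (mem_disjointed_iff (hfsmono k) _ ω).2
      ⟨Nat.find_spec (hex k), fun j hj => Nat.find_min (hex k) hj⟩
    have hmem_range : ∀ k, ik k ∈ Finset.range (2 ^ k + 1) := fun k =>
      Finset.mem_range.2 (by have := hik_le k; omega)
    have hYval : ∀ k, ΦY k ω = y (g k (ik k)) := fun k =>
      heval k Y (ik k) (hmem_range k) ω (hΔik k)
    have hFval : ∀ k, ΦF k ω = F (g k (ik k)) ω := fun k =>
      heval k F (ik k) (hmem_range k) ω (hΔik k)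
    have hglow : ∀ k, z ≤ g k (ik k) := by
      intro k
      have hmem : ω ∈ fs k (ik k) := Nat.find_spec (hex k)
      have hhit : hitIn cD y q (g k (ik k)) := hmem
      exact (hiff _ (hgq k _) (hgn k _)).1 hhit
    have hghigh : ∀ k, g k (ik k) ≤ z + (n - q) / 2 ^ k := by
      intro k
      rcases Nat.eq_zero_or_pos (ik k) with h0 | hpos
      · have hgk0 : g k (ik k) = q := by
          rw [h0]
          show grid q n k (min 0 (2 ^ k)) = q
          rw [min_eq_left (Nat.zero_le _)]
          exact grid_zero q n k
        rw [hgk0]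
        exact le_trans hzspec.1.1 le_self_add
      · obtain ⟨j, hj⟩ : ∃ j, ik k = j + 1 := ⟨ik k - 1, by omega⟩
        have hnot : ω ∉ fs k j := Nat.find_min (hex k)
          (show j < ik k by rw [hj]; exact Nat.lt_succ_self j)
        have hj1le : j + 1 ≤ 2 ^ k := hj ▸ hik_le k
        have hjle : j ≤ 2 ^ k := by omega
        have hnothit : ¬ hitIn cD y q (g k j) := hnot
        have hlt : g k j < z := by
          by_contra hle
          push_neg at hle
          exact hnothit ((hiff _ (hgq k j) (hgn k j)).2 hle)
        have hstep : g k (j + 1) = g k j + (n - q) / 2 ^ k := by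
          simp only [hg_def]
          rw [min_eq_left hj1le, min_eq_left hjle]
          exact grid_succ q n k j
        rw [hj, hstep]
        exact add_le_add_left (le_of_lt hlt) _
    have hmesh : Tendsto (fun k : ℕ => z + (n - q) / 2 ^ k) atTop (nhds z) := by
      have h := (mesh_tendsto (n - q)).const_add z
      rwa [add_zero] at h
    have hgtend : Tendsto (fun k => g k (ik k)) atTop (nhds z) :=
      tendsto_of_tendsto_of_tendsto_of_le_of_le tendsto_const_nhds hmesh hglow hghigh
    constructor
    · have h1 : Tendsto (fun k => y (g k (ik k))) atTop (nhds (y z)) :=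
        (hc.tendsto z).comp hgtend
      rw [hzspec.2] at h1
      exact h1.congr fun k => (hYval k).symm
    · have h1 : Tendsto (fun k => F (g k (ik k)) ω) atTop (nhds (F z ω)) :=
        (hFc.tendsto z).comp hgtend
      exact h1.congr fun k => (hFval k).symm
  -- a.e. identification of the limit of ΦF
  have hFq : ∀ᵐ ω ∂P, ω ∈ Bs n →
      F (firstZero (fun u => Y u ω) q n) ω = F q ω := by
    filter_upwards [hYnonneg, hYcont, hFmono, hFcont, hνIoc, hcarried] with ω hnn hc hFm
      hFc hνI hcar
    intro hB
    have hBn : hitIn cD (fun u => Y u ω) q n := hB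
    have hz := firstZero_mem hc (exists_zero_of_hitIn hc hnn hqn hBn)
    refine stieltjes_const (μ := ν ω) (f := fun u => F u ω) hνI hFc hFm hcar hz.1.1 ?_
    intro v hv1 hv2
    exact pos_of_lt_firstZero hnn ⟨le_of_lt hv1, le_trans (le_of_lt hv2) hz.1.2⟩ hv2
  -- DCT for ΦF
  have hIF : Tendsto (fun k => ∫ ω in A ∩ Bs n, ΦF k ω ∂P) atTop
      (nhds (∫ ω in A ∩ Bs n, F q ω ∂P)) := by
    have hABm : MeasurableSet (A ∩ Bs n) := ((ℱ.le q) A hA).inter ((ℱ.le n) _ (hBmeas n hqn))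
    refine tendsto_integral_of_dominated_convergence (fun ω => |Finf ω|)
      (fun k => (hΦFint k).restrict.aestronglyMeasurable) hFinf_int.abs.restrict ?_ ?_
    · intro k
      refine ae_restrict_of_ae ?_
      filter_upwards [hFmono, hF0, hFbnd] with ω h1 h2 h3
      rcases sum_indicator_cases (Finset.range (2 ^ k + 1)) (Δ k)
          ((hΔdisj k).set_pairwise _) (fun j ω' => F (g k j) ω') ω with
        ⟨i, _, _, heq⟩ | ⟨_, heq⟩
      · have he : ΦF k ω = F (g k i) ω := heq
        rw [Real.norm_eq_abs, he, abs_of_nonneg (h2 ▸ h1 (zero_le))]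
        exact le_trans (h3 _) (le_abs_self _)
      · have he : ΦF k ω = 0 := heq
        rw [Real.norm_eq_abs, he, abs_zero]
        exact abs_nonneg _
    · rw [ae_restrict_iff' hABm]
      filter_upwards [hYnonneg, hYcont, hFcont, hFq] with ω h1 h2 h3 h4
      intro hmem
      have h5 := (hptwise ω h1 h2 h3 hmem.2).2
      rwa [h4 hmem.2] at h5
  -- DCT for truncated ΦY
  have hIYc : ∀ (c : ℝ), 0 ≤ c →
      Tendsto (fun k => ∫ ω in A ∩ Bs n, min (ΦY k ω) c ∂P) atTop (nhds 0) := by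
    intro c hc
    have hABm : MeasurableSet (A ∩ Bs n) := ((ℱ.le q) A hA).inter ((ℱ.le n) _ (hBmeas n hqn))
    have h := tendsto_integral_of_dominated_convergence
      (μ := P.restrict (A ∩ Bs n)) (F := fun k ω => min (ΦY k ω) c)
      (f := fun _ => (0 : ℝ)) (fun _ => c)
      (fun k => (continuous_id.min continuous_const).comp_aestronglyMeasurable
        (hΦYint k).restrict.aestronglyMeasurable)
      (integrable_const c) ?_ ?_
    · simpa using h
    · intro k
      refine ae_restrict_of_ae ?_
      filter_upwards [hYnonneg] with ω h1
      have hΦnn : 0 ≤ ΦY k ω :=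
        Finset.sum_nonneg fun j _ => Set.indicator_nonneg (fun ω' _ => h1 (g k j)) ω
      rw [Real.norm_eq_abs, abs_of_nonneg (le_min hΦnn hc)]
      exact min_le_right _ _
    · rw [ae_restrict_iff' hABm]
      filter_upwards [hYnonneg, hYcont, hFcont] with ω h1 h2 h3
      intro hmem
      have h5 := ((hptwise ω h1 h2 h3 hmem.2).1).min
        (tendsto_const_nhds (x := c) (f := atTop))
      rwa [min_eq_left hc] at h5
  -- limit of IY exists
  have hIY : Tendsto (fun k => ∫ ω in A ∩ Bs n, ΦY k ω ∂P) atTop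
      (nhds ((∫ ω in A ∩ Bs n, M n ω ∂P) + ∫ ω in A ∩ Bs n, F q ω ∂P)) := by
    have h := (tendsto_const_nhds
      (x := ∫ ω in A ∩ Bs n, M n ω ∂P) (f := (atTop : Filter ℕ))).add hIF
    refine h.congr fun k => ?_
    have := claim1 k
    linarith
  -- the limit value T
  set T : ℝ := (∫ ω in A ∩ Bs n, M n ω ∂P) + ∫ ω in A ∩ Bs n, F q ω ∂P with hT_def
  have hTnonneg : 0 ≤ T := by
    refine ge_of_tendsto hIY (Filter.Eventually.of_forall fun k => ?_)
    refine integral_nonneg_of_ae (ae_restrict_of_ae ?_)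
    filter_upwards [hYnonneg] with ω h1
    exact Finset.sum_nonneg fun j _ => Set.indicator_nonneg (fun ω' _ => h1 (g k j)) ω
  have hTle : ∀ (j : ℕ), T ≤ ∫ ω, max (Y n ω - j) 0 ∂P := by
    intro j
    set c : ℝ := (j : ℝ) with hc_def
    have hc : (0 : ℝ) ≤ c := Nat.cast_nonneg j
    have hGint : ∀ k, Integrable (fun ω => max (ΦY k ω - c) 0) P := fun k =>
      ((hΦYint k).sub (integrable_const c)).pos_part
    have hminid : ∀ (a : ℝ), min a c = a - max (a - c) 0 := by
      intro a
      rcases le_total a c with h | h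
      · rw [min_eq_left h, max_eq_right (by linarith), sub_zero]
      · rw [min_eq_right h, max_eq_left (by linarith)]
        ring
    have hminint : ∀ k, Integrable (fun ω => min (ΦY k ω) c) P := fun k =>
      (((hΦYint k).sub (hGint k)).congr
        (Filter.Eventually.of_forall fun ω => (hminid (ΦY k ω)).symm))
    have hsplitk : ∀ k, ∫ ω in A ∩ Bs n, max (ΦY k ω - c) 0 ∂P
        = (∫ ω in A ∩ Bs n, ΦY k ω ∂P) - ∫ ω in A ∩ Bs n, min (ΦY k ω) c ∂P := by
      intro k
      have hcongr : ∫ ω in A ∩ Bs n, max (ΦY k ω - c) 0 ∂P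
          = ∫ ω in A ∩ Bs n, (ΦY k ω - min (ΦY k ω) c) ∂P := by
        refine integral_congr_ae (Filter.Eventually.of_forall fun ω => ?_)
        beta_reduce
        have := hminid (ΦY k ω)
        linarith
      rw [hcongr]
      exact integral_sub (hΦYint k).integrableOn (hminint k).integrableOn
    have htend : Tendsto (fun k => ∫ ω in A ∩ Bs n, max (ΦY k ω - c) 0 ∂P) atTop
        (nhds T) := by
      have h := hIY.sub (hIYc c hc)
      rw [sub_zero] at h
      exact h.congr fun k => (hsplitk k).symm
    exact le_of_tendsto htend (Filter.Eventually.of_forall fun k => claim2 c hc k)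
  have hδ : Tendsto (fun j : ℕ => ∫ ω, max (Y n ω - j) 0 ∂P) atTop (nhds 0) := by
    have h := tendsto_integral_of_dominated_convergence (μ := P)
      (F := fun (j : ℕ) ω => max (Y n ω - j) 0) (f := fun _ => (0 : ℝ))
      (fun ω => |Y n ω|)
      (fun j => (((hYint n).sub (integrable_const _)).pos_part).aestronglyMeasurable)
      (hYint n).abs ?_ ?_
    · simpa using h
    · intro j
      refine Filter.Eventually.of_forall fun ω => ?_
      beta_reduce
      rw [Real.norm_eq_abs, abs_of_nonneg (le_max_right _ _)]
      rcases le_total (Y n ω - (j : ℝ)) 0 with h' | h'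
      · rw [max_eq_right h']
        exact abs_nonneg _
      · rw [max_eq_left h']
        have : (0 : ℝ) ≤ (j : ℝ) := Nat.cast_nonneg j
        have h2 := le_abs_self (Y n ω)
        linarith
    · refine Filter.Eventually.of_forall fun ω => ?_
      obtain ⟨N, hN⟩ := exists_nat_ge (Y n ω)
      refine Tendsto.congr' ?_ (tendsto_const_nhds (x := (0 : ℝ)))
      rw [Filter.EventuallyEq, eventually_atTop]
      refine ⟨N, fun j hj => ?_⟩
      have : Y n ω - (j : ℝ) ≤ 0 := by
        have : (N : ℝ) ≤ (j : ℝ) := Nat.cast_le.2 hj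
        linarith
      exact (max_eq_right this).symm
  have hT0 : T = 0 :=
    le_antisymm (ge_of_tendsto hδ (Filter.Eventually.of_forall hTle)) hTnonneg
  -- conclusion
  have hint : Integrable (fun ω => M n ω + F q ω) P := (hM.integrable n).add (hFint q)
  rw [integral_add ((hM.integrable n).integrableOn) ((hFint q).integrableOn)]
  exact hT0

set_option maxHeartbeats 1000000 in
lemma lemB {Ω : Type*} {m : MeasurableSpace Ω}
    (P : Measure Ω) [IsProbabilityMeasure P]
    (ℱ : Filtration NNReal m)
    (Y M F : NNReal → Ω → ℝ) (Minf Finf : Ω → ℝ)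
    (hYadapted : ∀ t : NNReal, StronglyMeasurable[ℱ t] (Y t))
    (hYnonneg : ∀ᵐ ω ∂P, ∀ t, 0 ≤ Y t ω)
    (hYcont : ∀ᵐ ω ∂P, Continuous fun t => Y t ω)
    (hdecomp : ∀ t ω, Y t ω = M t ω + F t ω)
    (hM : Martingale M ℱ P)
    (hMinf_int : Integrable Minf P)
    (hML1 : Tendsto (fun t => ∫ ω, |M t ω - Minf ω| ∂P) atTop (nhds 0))
    (hFadapted : ∀ t : NNReal, StronglyMeasurable[ℱ t] (F t))
    (hFmono : ∀ᵐ ω ∂P, Monotone fun t => F t ω)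
    (hFcont : ∀ᵐ ω ∂P, Continuous fun t => F t ω)
    (hF0 : ∀ᵐ ω ∂P, F 0 ω = 0)
    (hFbnd : ∀ᵐ ω ∂P, ∀ s, F s ω ≤ Finf ω)
    (hFinf_int : Integrable Finf P)
    (ν : Ω → Measure NNReal)
    (hνIoc : ∀ᵐ ω ∂P, ∀ a b : NNReal, a ≤ b →
      ν ω (Set.Ioc a b) = ENNReal.ofReal (F b ω - F a ω))
    (hcarried : ∀ᵐ ω ∂P, ν ω {u | 0 < Y u ω} = 0)
    (cD : Set NNReal) (hcDc : cD.Countable) (hcDd : Dense cD)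
    (q : NNReal) (A : Set Ω) (hA : MeasurableSet[ℱ q] A) :
    ∫ ω in A ∩ ⋃ (j : ℕ), {ω | hitIn cD (fun u => Y u ω) q (q + j)},
      (Minf ω + F q ω) ∂P = 0 := by
  classical
  set Bs : ℕ → Set Ω := fun j => {ω | hitIn cD (fun u => Y u ω) q (q + j)} with hBs_def
  have hBmeas : ∀ j : ℕ, MeasurableSet (Bs j) := by
    intro j
    have hcnt : Countable ↥(Jset cD q (q + j)) := (Jset_countable hcDc q (q + j)).to_subtype
    have hmeas : Measurable fun ω => ⨅ u : Jset cD q (q + j), ENNReal.ofReal (Y u ω) :=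
      Measurable.iInf fun u => ((hYadapted u).mono (ℱ.le u)).measurable.ennreal_ofReal
    have he : Bs j = (fun ω => ⨅ u : Jset cD q (q + j), ENNReal.ofReal (Y u ω)) ⁻¹' {0} := by
      ext ω
      simp only [hBs_def, Set.mem_setOf_eq, Set.mem_preimage, Set.mem_singleton_iff, hitIn,
        iInf_subtype]
    rw [he]
    exact hmeas (measurableSet_singleton 0)
  have hBmono : Monotone Bs := fun i j hij ω hω =>
    hitIn_mono (add_le_add_right (by exact_mod_cast hij) q) hω
  have hFint : Integrable (F q) P := by
    refine hFinf_int.mono ((hFadapted q).mono (ℱ.le q)).aestronglyMeasurable ?_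
    filter_upwards [hFmono, hF0, hFbnd] with ω h1 h2 h3
    rw [Real.norm_eq_abs, Real.norm_eq_abs, abs_of_nonneg (h2 ▸ h1 ((zero_le (a := q))))]
    exact le_trans (h3 q) (le_abs_self _)
  have hint : Integrable (fun ω => Minf ω + F q ω) P := hMinf_int.add hFint
  have hAm : MeasurableSet A := (ℱ.le q) A hA
  have hSm : ∀ j : ℕ, MeasurableSet (A ∩ Bs j) := fun j => hAm.inter (hBmeas j)
  have hunion : ⋃ j : ℕ, (A ∩ Bs j) = A ∩ ⋃ j : ℕ, Bs j := (Set.inter_iUnion A Bs).symm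
  -- limit of the set integrals
  have h2 : Tendsto (fun j => ∫ ω in A ∩ Bs j, (Minf ω + F q ω) ∂P) atTop
      (nhds (∫ ω in A ∩ ⋃ j : ℕ, Bs j, (Minf ω + F q ω) ∂P)) := by
    have := tendsto_setIntegral_of_monotone (s := fun j : ℕ => A ∩ Bs j) hSm
      (fun i j hij => Set.inter_subset_inter_right A (hBmono hij))
      (hint.integrableOn (s := ⋃ j : ℕ, (A ∩ Bs j)))
    rwa [hunion] at this
  -- each approximation vanishes thanks to lemA
  have h1 : ∀ j : ℕ, ∫ ω in A ∩ Bs j, (M (q + j) ω + F q ω) ∂P = 0 := fun j =>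
    lemA P ℱ Y M F Finf hYadapted hYnonneg hYcont hdecomp hM hFadapted hFmono hFcont hF0
      hFbnd hFinf_int ν hνIoc hcarried cD hcDc hcDd q (q + j) le_self_add A hA
  -- comparison with the L¹ convergence
  have h3 : ∀ j : ℕ, |∫ ω in A ∩ Bs j, (Minf ω + F q ω) ∂P|
      ≤ ∫ ω, |M (q + j) ω - Minf ω| ∂P := by
    intro j
    have hi1 : Integrable (fun ω => M (q + (j : NNReal)) ω + F q ω) P :=
      (hM.integrable _).add hFint
    have hi2 : Integrable (fun ω => Minf ω - M (q + (j : NNReal)) ω) P :=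
      hMinf_int.sub (hM.integrable _)
    have hdiff : ∫ ω in A ∩ Bs j, (Minf ω + F q ω) ∂P
        = ∫ ω in A ∩ Bs j, (Minf ω - M (q + j) ω) ∂P := by
      have e0 : ∫ ω in A ∩ Bs j, (Minf ω + F q ω) ∂P
          = ∫ ω in A ∩ Bs j,
              ((M (q + j) ω + F q ω) + (Minf ω - M (q + j) ω)) ∂P := by
        refine setIntegral_congr_fun (hSm j) fun ω _ => ?_
        ring
      have e2 := integral_add (μ := P.restrict (A ∩ Bs j)) hi1.integrableOn hi2.integrableOn
      rw [e0, e2, h1 j, zero_add]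
    rw [hdiff]
    calc |∫ ω in A ∩ Bs j, (Minf ω - M (q + j) ω) ∂P|
        ≤ ∫ ω in A ∩ Bs j, |Minf ω - M (q + j) ω| ∂P := by
          have := norm_integral_le_integral_norm (μ := P.restrict (A ∩ Bs j))
            (f := fun ω => Minf ω - M (q + (j : NNReal)) ω)
          simpa [Real.norm_eq_abs] using this
      _ ≤ ∫ ω, |Minf ω - M (q + j) ω| ∂P := by
          refine setIntegral_le_integral (hMinf_int.sub (hM.integrable (q + j))).abs ?_
          exact Filter.Eventually.of_forall fun ω => abs_nonneg _
      _ = ∫ ω, |M (q + j) ω - Minf ω| ∂P := by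
          refine integral_congr_ae (Filter.Eventually.of_forall fun ω => ?_)
          beta_reduce
          rw [abs_sub_comm]
  have h4 : Tendsto (fun j : ℕ => ∫ ω, |M (q + j) ω - Minf ω| ∂P) atTop (nhds 0) := by
    have hcomp : Tendsto (fun j : ℕ => q + (j : NNReal)) atTop atTop :=
      tendsto_atTop_mono (fun j => (le_add_self : ((j : ℕ) : NNReal) ≤ q + j))
        tendsto_natCast_atTop_atTop
    exact hML1.comp hcomp
  have h5 : Tendsto (fun j => ∫ ω in A ∩ Bs j, (Minf ω + F q ω) ∂P) atTop (nhds 0) :=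
    squeeze_zero_norm (fun j => h3 j) h4
  exact tendsto_nhds_unique h2 h5


/-- Let `Y = M + F` be a nonnegative continuous `(ℱ t)`-adapted
process, where `M` is an `(ℱ t)`-martingale with `M 0 = 0` converging a.s. and in `L¹`
to `M_∞`, and `F` is adapted with continuous nondecreasing paths, `F 0 = 0` and
integrable limit `F_∞`.  Assume `P(Y_∞ = 0) = 0` (with `Y_∞ := M_∞ + F_∞`) and that the
Lebesgue–Stieltjes measure `dF` (encoded by the kernel `ν`) is a.s. carried by the zero
set of `Y`.  With `σ := sup{t ≥ 0 : Y t = 0}`, for every `t ≥ 0` one has, `P`-a.s.,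
`Y t = E^P[Y_∞ · 1_{σ ≤ t} | ℱ t]`, i.e. `Y` is a relative martingale associated
with `σ`. -/
theorem stmt_17 {Ω : Type*} {m : MeasurableSpace Ω}
    (P : Measure Ω) [IsProbabilityMeasure P]
    (ℱ : Filtration NNReal m)
    (Y M F : NNReal → Ω → ℝ)
    (Minf Finf : Ω → ℝ)
    (hYadapted : ∀ t : NNReal, StronglyMeasurable[ℱ t] (Y t))
    (hYnonneg : ∀ᵐ ω ∂P, ∀ t, 0 ≤ Y t ω)
    (hYcont : ∀ᵐ ω ∂P, Continuous fun t => Y t ω)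
    (hdecomp : ∀ t ω, Y t ω = M t ω + F t ω)
    (hM : Martingale M ℱ P)
    (hM0 : ∀ᵐ ω ∂P, M 0 ω = 0)
    (hMinf_int : Integrable Minf P)
    (hMas : ∀ᵐ ω ∂P, Tendsto (fun t => M t ω) atTop (nhds (Minf ω)))
    (hML1 : Tendsto (fun t => ∫ ω, |M t ω - Minf ω| ∂P) atTop (nhds 0))
    (hFadapted : ∀ t : NNReal, StronglyMeasurable[ℱ t] (F t))
    (hFpath : ∀ᵐ ω ∂P, Monotone (fun t => F t ω) ∧ Continuous (fun t => F t ω) ∧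
      F 0 ω = 0 ∧ Tendsto (fun t => F t ω) atTop (nhds (Finf ω)))
    (hFinf_int : Integrable Finf P)
    (hYinf : P {ω | Minf ω + Finf ω = 0} = 0)
    (ν : Ω → Measure NNReal)
    (hν : ∀ᵐ ω ∂P, (∀ a b : NNReal, a ≤ b →
        ν ω (Set.Ioc a b) = ENNReal.ofReal (F b ω - F a ω)) ∧
      ν ω {0} = 0 ∧ ν ω Set.univ = ENNReal.ofReal (Finf ω))
    (hcarried : ∀ᵐ ω ∂P, ν ω {u | 0 < Y u ω} = 0)
    (σ : Ω → NNReal)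
    (hσdef : ∀ ω, σ ω = sSup {t : NNReal | Y t ω = 0})
    (t : NNReal) :
    Y t =ᵐ[P]
      P[fun ω => (Minf ω + Finf ω) *
        Set.indicator {ω' | σ ω' ≤ t} (fun _ => (1 : ℝ)) ω | ℱ t] := by
  classical
  obtain ⟨cD, hcDc, hcDd⟩ := TopologicalSpace.exists_countable_dense NNReal
  -- unpack the path hypotheses
  have hFmono : ∀ᵐ ω ∂P, Monotone fun u => F u ω := hFpath.mono fun ω h => h.1
  have hFcont : ∀ᵐ ω ∂P, Continuous fun u => F u ω := hFpath.mono fun ω h => h.2.1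
  have hF0 : ∀ᵐ ω ∂P, F 0 ω = 0 := hFpath.mono fun ω h => h.2.2.1
  have hFlim : ∀ᵐ ω ∂P, Tendsto (fun u => F u ω) atTop (nhds (Finf ω)) :=
    hFpath.mono fun ω h => h.2.2.2
  have hFbnd : ∀ᵐ ω ∂P, ∀ s, F s ω ≤ Finf ω := by
    filter_upwards [hFmono, hFlim] with ω h1 h2
    exact fun s => h1.ge_of_tendsto h2 s
  have hνIoc : ∀ᵐ ω ∂P, ∀ a b : NNReal, a ≤ b →
      ν ω (Set.Ioc a b) = ENNReal.ofReal (F b ω - F a ω) := hν.mono fun ω h => h.1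
  have hν0 : ∀ᵐ ω ∂P, ν ω {0} = 0 := hν.mono fun ω h => h.2.1
  have hνuniv : ∀ᵐ ω ∂P, ν ω Set.univ = ENNReal.ofReal (Finf ω) := hν.mono fun ω h => h.2.2
  -- integrability
  have hFint : ∀ s, Integrable (F s) P := by
    intro s
    refine hFinf_int.mono ((hFadapted s).mono (ℱ.le s)).aestronglyMeasurable ?_
    filter_upwards [hFmono, hF0, hFbnd] with ω h1 h2 h3
    rw [Real.norm_eq_abs, Real.norm_eq_abs, abs_of_nonneg (h2 ▸ h1 ((zero_le (a := s))))]
    exact le_trans (h3 s) (le_abs_self _)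
  have hYint : ∀ s, Integrable (Y s) P := fun s =>
    ((hM.integrable s).add (hFint s)).congr
      (Filter.Eventually.of_forall fun ω => (hdecomp s ω).symm)
  -- positivity of the limit
  have hYtend : ∀ᵐ ω ∂P, Tendsto (fun u => Y u ω) atTop (nhds (Minf ω + Finf ω)) := by
    filter_upwards [hMas, hFlim] with ω h3 h4
    exact (h3.add h4).congr fun u => (hdecomp u ω).symm
  have hYinf_pos : ∀ᵐ ω ∂P, 0 < Minf ω + Finf ω := by
    have hne : ∀ᵐ ω ∂P, Minf ω + Finf ω ≠ 0 := by
      have he : {ω | ¬ Minf ω + Finf ω ≠ 0} = {ω | Minf ω + Finf ω = 0} := by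
        ext ω; simp
      rw [ae_iff, he]
      exact hYinf
    filter_upwards [hne, hYnonneg, hYtend] with ω h1 h2 hlim
    have h0 : 0 ≤ Minf ω + Finf ω :=
      ge_of_tendsto hlim (Filter.Eventually.of_forall fun u => h2 u)
    exact lt_of_le_of_ne h0 (Ne.symm h1)
  have hY0 : ∀ᵐ ω ∂P, Y 0 ω = 0 := by
    filter_upwards [hM0, hF0] with ω h1 h2
    rw [hdecomp 0 ω, h1, h2, add_zero]
  -- the set of paths that vanish after time t and the last zero
  set S' : Set Ω := {ω | ∃ u, t < u ∧ Y u ω = 0} with hS'_def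
  have hσS : ∀ᵐ ω ∂P, (σ ω ≤ t ↔ ω ∉ S') := by
    filter_upwards [hYcont, hY0, hYtend, hYinf_pos] with ω hc h0 hlim hpos
    have hZne : ({u : NNReal | Y u ω = 0} : Set NNReal).Nonempty := ⟨0, h0⟩
    have hbdd : BddAbove {u : NNReal | Y u ω = 0} := by
      have hev : ∀ᶠ u in atTop, Y u ω ∈ Set.Ioi (0 : ℝ) := hlim (isOpen_Ioi.mem_nhds hpos)
      obtain ⟨T, hT⟩ := eventually_atTop.mp hev
      refine ⟨T, fun u hu => ?_⟩
      by_contra hTu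
      push_neg at hTu
      exact absurd hu (ne_of_gt (hT u hTu.le))
    constructor
    · rintro hσt ⟨u, htu, hu⟩
      have hle : u ≤ σ ω := by rw [hσdef ω]; exact le_csSup hbdd hu
      exact absurd (hle.trans hσt) (not_le.2 htu)
    · intro hnS
      rw [hσdef ω]
      refine csSup_le hZne fun u hu => ?_
      by_contra hut
      push_neg at hut
      exact hnS ⟨u, hut, hu⟩
  -- hitting sets
  set Bq : NNReal → NNReal → Set Ω := fun q s => {ω | hitIn cD (fun u => Y u ω) q s}
    with hBq_def
  set Dq : NNReal → Set Ω := fun q => ⋃ j : ℕ, Bq q (q + j) with hDq_def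
  have hBqmeas : ∀ q s, MeasurableSet (Bq q s) := by
    intro q s
    have hcnt : Countable ↥(Jset cD q s) := (Jset_countable hcDc q s).to_subtype
    have hmeas : Measurable fun ω => ⨅ u : Jset cD q s, ENNReal.ofReal (Y u ω) :=
      Measurable.iInf fun u => ((hYadapted u).mono (ℱ.le u)).measurable.ennreal_ofReal
    have he : Bq q s = (fun ω => ⨅ u : Jset cD q s, ENNReal.ofReal (Y u ω)) ⁻¹' {0} := by
      ext ω
      simp only [hBq_def, Set.mem_setOf_eq, Set.mem_preimage, Set.mem_singleton_iff, hitIn,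
        iInf_subtype]
    rw [he]
    exact hmeas (measurableSet_singleton 0)
  have hDmeas : ∀ q, MeasurableSet (Dq q) := fun q =>
    MeasurableSet.iUnion fun j => hBqmeas q (q + j)
  -- approximating times
  set qs : ℕ → NNReal := fun j => t + ((j : NNReal) + 1)⁻¹ with hqs_def
  have hqs_gt : ∀ j, t < qs j := by
    intro j
    have hpos : (0 : NNReal) < ((j : NNReal) + 1)⁻¹ := by positivity
    exact lt_add_of_pos_right t hpos
  have hqs_tend : Tendsto qs atTop (nhds t) := by
    rw [← NNReal.tendsto_coe]
    have hc : Tendsto (fun j : ℕ => (t : ℝ) + ((j : ℝ) + 1)⁻¹) atTop (nhds ((t : ℝ) + 0)) := by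
      refine tendsto_const_nhds.add ?_
      have := tendsto_one_div_add_atTop_nhds_zero_nat (𝕜 := ℝ)
      simpa [one_div] using this
    rw [add_zero] at hc
    refine hc.congr fun j => ?_
    rw [hqs_def]
    push_cast
    ring
  -- the key vanishing integrals
  set finf : Ω → ℝ := fun ω => Set.indicator S' (fun ω' => Minf ω' + F t ω') ω with hfinf_def
  set hj : ℕ → Ω → ℝ := fun j ω =>
    Set.indicator (Dq (qs j)) (fun ω' => Minf ω' + F (qs j) ω') ω with hhj_def
  have hptS : ∀ᵐ ω ∂P, Tendsto (fun j => hj j ω) atTop (nhds (finf ω)) := by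
    filter_upwards [hYcont, hYnonneg, hFcont] with ω hc hnn hFc
    by_cases hω : ω ∈ S'
    · obtain ⟨u, htu, hu⟩ := hω
      have hev : ∀ᶠ j in atTop, qs j < u := hqs_tend.eventually_lt_const htu
      have hevD : ∀ᶠ j in atTop, ω ∈ Dq (qs j) := by
        refine hev.mono fun j hjlt => ?_
        obtain ⟨mm, hmm⟩ := exists_nat_ge u
        refine Set.mem_iUnion.2 ⟨mm, ?_⟩
        exact hitIn_of_zero hcDd hc ⟨hjlt.le, le_trans hmm le_add_self⟩ hu
      have heq : ∀ᶠ j in atTop, Minf ω + F (qs j) ω = hj j ω := by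
        refine hevD.mono fun j hjD => ?_
        show Minf ω + F (qs j) ω
          = Set.indicator (Dq (qs j)) (fun ω' => Minf ω' + F (qs j) ω') ω
        rw [Set.indicator_of_mem hjD]
      have hFt : Tendsto (fun j => Minf ω + F (qs j) ω) atTop (nhds (Minf ω + F t ω)) :=
        tendsto_const_nhds.add ((hFc.tendsto t).comp hqs_tend)
      have hmemS : ω ∈ S' := ⟨u, htu, hu⟩
      have hval : finf ω = Minf ω + F t ω := Set.indicator_of_mem hmemS _
      rw [hval]
      exact hFt.congr' heq
    · have hnot : ∀ j, ω ∉ Dq (qs j) := by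
        intro j hmem
        obtain ⟨mm, hhit⟩ := Set.mem_iUnion.1 hmem
        obtain ⟨u, humem, hyu⟩ := exists_zero_of_hitIn hc hnn le_self_add hhit
        exact hω ⟨u, lt_of_lt_of_le (hqs_gt j) humem.1, hyu⟩
      have heq : ∀ j, hj j ω = 0 := fun j => Set.indicator_of_notMem (hnot j) _
      have hval : finf ω = 0 := Set.indicator_of_notMem hω _
      rw [hval]
      exact tendsto_const_nhds.congr fun j => (heq j).symm
  have hmeas_hj : ∀ j, AEStronglyMeasurable (hj j) P := fun j =>
    ((hMinf_int.add (hFint (qs j))).aestronglyMeasurable).indicator (hDmeas (qs j))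
  have hbnd_hj : ∀ j, ∀ᵐ ω ∂P, ‖hj j ω‖ ≤ |Minf ω| + |Finf ω| := by
    intro j
    filter_upwards [hFmono, hF0, hFbnd] with ω h1 h2 h3
    rw [Real.norm_eq_abs]
    by_cases hmem : ω ∈ Dq (qs j)
    · have he : hj j ω = Minf ω + F (qs j) ω := Set.indicator_of_mem hmem _
      rw [he]
      have hFpos : 0 ≤ F (qs j) ω := h2 ▸ h1 (zero_le)
      calc |Minf ω + F (qs j) ω| ≤ |Minf ω| + |F (qs j) ω| := abs_add_le _ _
        _ ≤ |Minf ω| + |Finf ω| := by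
            rw [abs_of_nonneg hFpos]
            exact add_le_add_right (le_trans (h3 _) (le_abs_self _)) _
    · have he : hj j ω = 0 := Set.indicator_of_notMem hmem _
      rw [he, abs_zero]
      positivity
  have hfinf_meas : AEStronglyMeasurable finf P :=
    aestronglyMeasurable_of_tendsto_ae atTop hmeas_hj hptS
  have hfinf_bnd : ∀ᵐ ω ∂P, ‖finf ω‖ ≤ |Minf ω| + |Finf ω| := by
    filter_upwards [hFmono, hF0, hFbnd] with ω h1 h2 h3
    rw [Real.norm_eq_abs]
    by_cases hmem : ω ∈ S'
    · have he : finf ω = Minf ω + F t ω := Set.indicator_of_mem hmem _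
      rw [he]
      have hFpos : 0 ≤ F t ω := h2 ▸ h1 (zero_le)
      calc |Minf ω + F t ω| ≤ |Minf ω| + |F t ω| := abs_add_le _ _
        _ ≤ |Minf ω| + |Finf ω| := by
            rw [abs_of_nonneg hFpos]
            exact add_le_add_right (le_trans (h3 _) (le_abs_self _)) _
    · have he : finf ω = 0 := Set.indicator_of_notMem hmem _
      rw [he, abs_zero]
      positivity
  have hfinf_int : Integrable finf P :=
    Integrable.mono' (hMinf_int.abs.add hFinf_int.abs) hfinf_meas hfinf_bnd
  have hzero : ∀ A : Set Ω, MeasurableSet[ℱ t] A → ∫ ω in A, finf ω ∂P = 0 := by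
    intro A hA
    have hjint : ∀ j, ∫ ω in A, hj j ω ∂P = 0 := by
      intro j
      rw [hhj_def]
      rw [setIntegral_indicator (hDmeas (qs j))]
      exact lemB P ℱ Y M F Minf Finf hYadapted hYnonneg hYcont hdecomp hM hMinf_int hML1
        hFadapted hFmono hFcont hF0 hFbnd hFinf_int ν hνIoc hcarried cD hcDc hcDd (qs j) A
        (ℱ.mono (hqs_gt j).le A hA)
    have hDCT : Tendsto (fun j => ∫ ω in A, hj j ω ∂P) atTop
        (nhds (∫ ω in A, finf ω ∂P)) :=
      tendsto_integral_of_dominated_convergence (μ := P.restrict A)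
        (fun ω => |Minf ω| + |Finf ω|)
        (fun j => (hmeas_hj j).restrict) ((hMinf_int.abs.add hFinf_int.abs).restrict)
        (fun j => ae_restrict_of_ae (hbnd_hj j)) (ae_restrict_of_ae hptS)
    have h0 : Tendsto (fun j => ∫ ω in A, hj j ω ∂P) atTop (nhds 0) :=
      tendsto_const_nhds.congr fun j => (hjint j).symm
    exact tendsto_nhds_unique hDCT h0
  -- the target integrand
  set G : Ω → ℝ := fun ω => (Minf ω + Finf ω) *
    Set.indicator {ω' | σ ω' ≤ t} (fun _ => (1 : ℝ)) ω with hG_def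
  have hGae : G =ᵐ[P] fun ω => (Minf ω + F t ω) - finf ω := by
    filter_upwards [hσS, hYnonneg, hνIoc, hν0, hνuniv, hFmono, hF0, hFlim, hcarried]
      with ω hσiff hnn hIoc h0ν huniv hFm hF0ω hFl hcar
    by_cases hσt : σ ω ≤ t
    · have hnS : ω ∉ S' := hσiff.1 hσt
      have hmem1 : ω ∈ {ω' | σ ω' ≤ t} := hσt
      have hind : Set.indicator {ω' | σ ω' ≤ t} (fun _ => (1 : ℝ)) ω = 1 :=
        Set.indicator_of_mem hmem1 _
      have hfz : finf ω = 0 := Set.indicator_of_notMem hnS _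
      have hFeq : Finf ω = F t ω := by
        refine stieltjes_tail_const hIoc h0ν huniv hF0ω hFm hFl ?_
        refine le_antisymm ?_ (zero_le)
        calc ν ω (Set.Ioi t) ≤ ν ω {u | 0 < Y u ω} := by
              refine measure_mono fun u hu => ?_
              have hne : Y u ω ≠ 0 := fun hzero' => hnS ⟨u, hu, hzero'⟩
              exact lt_of_le_of_ne (hnn u) (Ne.symm hne)
          _ = 0 := hcar
      rw [hG_def]
      beta_reduce
      rw [hind, hfz, hFeq]
      ring
    · have hS : ω ∈ S' := by
        by_contra hns
        exact hσt (hσiff.2 hns)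
      have hmem0 : ω ∉ {ω' | σ ω' ≤ t} := hσt
      have hind : Set.indicator {ω' | σ ω' ≤ t} (fun _ => (1 : ℝ)) ω = 0 :=
        Set.indicator_of_notMem hmem0 _
      have hfz : finf ω = Minf ω + F t ω := Set.indicator_of_mem hS _
      rw [hG_def]
      beta_reduce
      rw [hind, hfz]
      ring
  have hMFt_int : Integrable (fun ω => Minf ω + F t ω) P := hMinf_int.add (hFint t)
  have hGint : Integrable G P := (hMFt_int.sub hfinf_int).congr hGae.symm
  -- set integral identification
  have heq : ∀ s : Set Ω, MeasurableSet[ℱ t] s → P s < ⊤ →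
      ∫ ω in s, Y t ω ∂P = ∫ ω in s, G ω ∂P := by
    intro s hs _
    have hsm : MeasurableSet s := ℱ.le t s hs
    -- ∫ G
    have h1 : ∫ ω in s, G ω ∂P = ∫ ω in s, ((Minf ω + F t ω) - finf ω) ∂P :=
      integral_congr_ae (ae_restrict_of_ae hGae)
    have h2 : ∫ ω in s, ((Minf ω + F t ω) - finf ω) ∂P
        = (∫ ω in s, (Minf ω + F t ω) ∂P) - ∫ ω in s, finf ω ∂P :=
      integral_sub hMFt_int.integrableOn hfinf_int.integrableOn
    have h3 : ∫ ω in s, finf ω ∂P = 0 := hzero s hs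
    have h4 : ∫ ω in s, (Minf ω + F t ω) ∂P
        = (∫ ω in s, Minf ω ∂P) + ∫ ω in s, F t ω ∂P :=
      integral_add hMinf_int.integrableOn (hFint t).integrableOn
    -- ∫ Minf over s equals ∫ M t over s
    have h5 : ∫ ω in s, M t ω ∂P = ∫ ω in s, Minf ω ∂P := by
      have hconst : ∀ j : ℕ, ∫ ω in s, M (t + j) ω ∂P = ∫ ω in s, M t ω ∂P :=
        fun j => (hM.setIntegral_eq le_self_add hs).symm
      have hdle : ∀ j : ℕ, |(∫ ω in s, M (t + j) ω ∂P) - ∫ ω in s, Minf ω ∂P|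
          ≤ ∫ ω, |M (t + j) ω - Minf ω| ∂P := by
        intro j
        have hsub : (∫ ω in s, M (t + j) ω ∂P) - ∫ ω in s, Minf ω ∂P
            = ∫ ω in s, (M (t + j) ω - Minf ω) ∂P :=
          (integral_sub (hM.integrable _).integrableOn hMinf_int.integrableOn).symm
        rw [hsub]
        calc |∫ ω in s, (M (t + j) ω - Minf ω) ∂P|
            ≤ ∫ ω in s, |M (t + j) ω - Minf ω| ∂P := by
              have := norm_integral_le_integral_norm (μ := P.restrict s)
                (f := fun ω => M (t + (j : NNReal)) ω - Minf ω)
              simpa [Real.norm_eq_abs] using this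
          _ ≤ ∫ ω, |M (t + j) ω - Minf ω| ∂P := by
              refine setIntegral_le_integral ((hM.integrable _).sub hMinf_int).abs ?_
              exact Filter.Eventually.of_forall fun ω => abs_nonneg _
      have h4' : Tendsto (fun j : ℕ => ∫ ω, |M (t + j) ω - Minf ω| ∂P) atTop (nhds 0) := by
        have hcomp : Tendsto (fun j : ℕ => t + (j : NNReal)) atTop atTop :=
          tendsto_atTop_mono (fun j => (le_add_self : ((j : ℕ) : NNReal) ≤ t + j))
            tendsto_natCast_atTop_atTop
        exact hML1.comp hcomp
      have h5' : Tendsto (fun j : ℕ => (∫ ω in s, M (t + j) ω ∂P) - ∫ ω in s, Minf ω ∂P)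
          atTop (nhds 0) := squeeze_zero_norm hdle h4'
      have h6' : Tendsto (fun j : ℕ => (∫ ω in s, M (t + j) ω ∂P) - ∫ ω in s, Minf ω ∂P)
          atTop (nhds ((∫ ω in s, M t ω ∂P) - ∫ ω in s, Minf ω ∂P)) :=
        tendsto_const_nhds.congr fun j => by rw [hconst j]
      have := tendsto_nhds_unique h6' h5'
      linarith
    have h6 : ∫ ω in s, Y t ω ∂P = (∫ ω in s, M t ω ∂P) + ∫ ω in s, F t ω ∂P := by
      have he : ∫ ω in s, Y t ω ∂P = ∫ ω in s, (M t ω + F t ω) ∂P :=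
        integral_congr_ae (Filter.Eventually.of_forall fun ω => hdecomp t ω)
      rw [he]
      exact integral_add (hM.integrable t).integrableOn (hFint t).integrableOn
    rw [h1, h2, h3, h4, h6, ← h5]
    ring
  exact ae_eq_condExp_of_forall_setIntegral_eq (ℱ.le t) hGint
    (fun s _ _ => (hYint t).integrableOn) heq ((hYadapted t).aestronglyMeasurable)
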